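/- arXiv:1504.08092 — 2 statements merged into one kernel-verified Lean document; each statement's English description precedes it below -/
import Mathlib

section
/- Let δ = 1/4 and t_m = 4^{m-1}. Then the generalized Cantor set K = ⋂_{m≥1} K_m, where K_m consists of 2^m intervals of length δ^{t_m} constructed as above, has finite Hausdorff measure with respect to the gauge h(s) = 1/ln(1/s); i.e., there is a constant C < ∞ with H^h(K) ≤ C. -/
open MeasureTheory

/-- Exponents `t 0 = 0`, `t m = 4 ^ (m-1)` for `m ≥ 1`. -/
def cantorT (m : ℕ) : ℕ := if m = 0 then 0 else 4 ^ (m - 1)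

/-- Length `δ ^ t m` of the stage-`m` intervals, with `δ = 1/4`; `ℓ 0 = 1`. -/
noncomputable def cantorLen (m : ℕ) : ℝ := (1 / 4 : ℝ) ^ cantorT m

/-- Left endpoint of the interval of stage `m` determined by the choices `c`. -/
noncomputable def cantorLeft (m : ℕ) (c : Fin m → Bool) : ℝ :=
  ∑ j : Fin m, if c j then cantorLen j - cantorLen (j + 1) else 0

/-- The stage-`m` set: union of `2^m` closed intervals of length `δ ^ t m`. -/
noncomputable def cantorStage (m : ℕ) : Set ℝ :=
  {x | ∃ c : Fin m → Bool, cantorLeft m c ≤ x ∧ x ≤ cantorLeft m c + cantorLen m}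

/-- The generalized Cantor set `K = ⋂ m, K_m` with `δ = 1/4`, `t m = 4^(m-1)`. -/
noncomputable def cantorSetK : Set ℝ := ⋂ m, cantorStage m

/-- The Hausdorff-type measure with gauge `h s = (log (1/s))⁻¹`. -/
noncomputable def gaugeMeasure : Measure ℝ :=
  Measure.mkMetric (fun r : ENNReal =>
    if r = 0 then 0 else ENNReal.ofReal (Real.log (1 / r.toReal))⁻¹)

lemma cantorLen_pos (m : ℕ) : 0 < cantorLen m := by
  unfold cantorLen; positivity

lemma cantorT_strictMono : StrictMono cantorT := by
  intro a b hab
  unfold cantorT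
  rcases Nat.eq_zero_or_pos a with ha | ha
  · subst ha
    simp only [if_pos rfl, if_neg (by omega : ¬ b = 0)]
    positivity
  · rw [if_neg ha.ne', if_neg (ha.trans hab).ne']
    exact Nat.pow_lt_pow_right (by norm_num) (by omega)

/-- the generalized Cantor set with `δ = 1/4`, `t m = 4^(m-1)` has
finite Hausdorff measure with respect to the gauge `h s = 1 / log (1/s)`. -/
theorem cantorSetK_gaugeMeasure_finite :
    ∃ C : ENNReal, C < ⊤ ∧ gaugeMeasure cantorSetK ≤ C := by
  refine ⟨ENNReal.ofReal (2 / Real.log 4), ENNReal.ofReal_lt_top, ?_⟩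
  have hlog4 : (0:ℝ) < Real.log 4 := Real.log_pos (by norm_num)
  set g : ENNReal → ENNReal := fun r =>
    if r = 0 then 0 else ENNReal.ofReal (Real.log (1 / r.toReal))⁻¹ with hg
  set t : ∀ n : ℕ, (Fin n → Bool) → Set ℝ := fun n c =>
    Set.Icc (cantorLeft n c) (cantorLeft n c + cantorLen n) with htdef
  have hdiam : ∀ n c, EMetric.diam (t n c) = ENNReal.ofReal (cantorLen n) := by
    intro n c
    rw [htdef]
    simp [EMetric.diam, Real.ediam_Icc]
  have hr : Filter.Tendsto (fun n => ENNReal.ofReal (cantorLen n)) Filter.atTop (nhds 0) := by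
    rw [← ENNReal.ofReal_zero]
    apply ENNReal.tendsto_ofReal
    have : Filter.Tendsto (fun k : ℕ => (1/4:ℝ)^k) Filter.atTop (nhds 0) :=
      tendsto_pow_atTop_nhds_zero_of_lt_one (by norm_num) (by norm_num)
    exact this.comp cantorT_strictMono.tendsto_atTop
  have key : gaugeMeasure cantorSetK ≤
      Filter.liminf (fun n => ∑ c : Fin n → Bool, g (EMetric.diam (t n c))) Filter.atTop := by
    apply Measure.mkMetric_le_liminf_sum cantorSetK
        (fun n => ENNReal.ofReal (cantorLen n)) hr t
    · filter_upwards with n c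
      exact (hdiam n c).le
    · filter_upwards with n x hx
      have hx' : x ∈ cantorStage n := Set.mem_iInter.mp hx n
      obtain ⟨c, h1, h2⟩ := hx'
      exact Set.mem_iUnion.mpr ⟨c, h1, h2⟩
  refine key.trans ?_
  apply Filter.liminf_le_of_frequently_le'
  rw [Filter.frequently_atTop]
  intro a
  refine ⟨max a 1, le_max_left _ _, ?_⟩
  set n := max a 1
  have hn1 : 1 ≤ n := le_max_right _ _
  have hval : ∀ c : Fin n → Bool, g (EMetric.diam (t n c)) =
      ENNReal.ofReal ((cantorT n * Real.log 4)⁻¹) := by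
    intro c
    rw [hdiam]
    simp only [hg]
    have hne : ENNReal.ofReal (cantorLen n) ≠ 0 := by
      simp [ENNReal.ofReal_eq_zero, not_le, cantorLen_pos n]
    rw [if_neg hne, ENNReal.toReal_ofReal (cantorLen_pos n).le]
    congr 2
    unfold cantorLen
    rw [one_div, ← inv_pow]
    norm_num [Real.log_pow]
  rw [Finset.sum_congr rfl (fun c _ => hval c), Finset.sum_const, Finset.card_univ,
    Fintype.card_fun, Fintype.card_bool, Fintype.card_fin, nsmul_eq_mul]
  rw [← ENNReal.ofReal_natCast, ← ENNReal.ofReal_mul (by positivity)]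
  apply ENNReal.ofReal_le_ofReal
  have hT : (cantorT n : ℝ) = 4 ^ (n - 1) := by
    unfold cantorT
    rw [if_neg (by omega)]
    push_cast; ring
  rw [hT]
  push_cast
  rw [div_eq_mul_inv, mul_inv, ← mul_assoc]
  gcongr ?_ * _
  rw [← div_eq_mul_inv, div_le_iff₀ (by positivity)]
  calc (2:ℝ)^n = 2 * 2^(n-1) := by
        rw [← pow_succ']
        congr 1
        omega
    _ ≤ 2 * 4^(n-1) := by gcongr <;> norm_num
end

section
/- Let μ be a probability measure on ℂ whose support is contained in [0,1], let z⁰ ∈ ℂ with Re z⁰ ≤ 0, and set λ = dist(z⁰, supp μ) = |z⁰| (attained at 0). Then for all t ≥ λ one has μ({w : |w| ≤ t − λ}) ≤ μ({w : |w − z⁰| ≤ t}) ≤ μ({w : |w| ≤ √(t² − λ²)}). -/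
open MeasureTheory

/-- if `μ` is a probability measure on `ℂ` supported in the segment
`[0,1] ⊂ ℝ ⊂ ℂ` and `Re z⁰ ≤ 0`, so that `λ = dist(z⁰, supp μ) = |z⁰|`, then for
all `t ≥ λ`,
`μ{|w| ≤ t − λ} ≤ μ{|w − z⁰| ≤ t} ≤ μ{|w| ≤ √(t² − λ²)}`. -/
theorem disk_mass_comparison (μ : Measure ℂ) [IsProbabilityMeasure μ]
    (hsupp : μ {z : ℂ | ¬(z.im = 0 ∧ 0 ≤ z.re ∧ z.re ≤ 1)} = 0)
    (z0 : ℂ) (hre : z0.re ≤ 0) (t : ℝ) (ht : ‖z0‖ ≤ t) :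
    μ {w : ℂ | ‖w‖ ≤ t - ‖z0‖}
        ≤ μ {w : ℂ | ‖w - z0‖ ≤ t} ∧
    μ {w : ℂ | ‖w - z0‖ ≤ t}
        ≤ μ {w : ℂ | ‖w‖ ≤ Real.sqrt (t ^ 2 - ‖z0‖ ^ 2)} := by
  constructor
  · apply measure_mono
    intro w hw
    simp only [Set.mem_setOf_eq] at *
    calc ‖w - z0‖ ≤ ‖w‖ + ‖z0‖ :=
          by simpa using norm_sub_le w z0
      _ ≤ t := by linarith
  · have hsub : {w : ℂ | ‖w - z0‖ ≤ t} ⊆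
        {w : ℂ | ‖w‖ ≤ Real.sqrt (t ^ 2 - ‖z0‖ ^ 2)} ∪
        {z : ℂ | ¬(z.im = 0 ∧ 0 ≤ z.re ∧ z.re ≤ 1)} := by
      intro w hw
      by_cases hS : w.im = 0 ∧ 0 ≤ w.re ∧ w.re ≤ 1
      · left
        simp only [Set.mem_setOf_eq] at *
        obtain ⟨him, hre0, _⟩ := hS
        rw [Real.le_sqrt (norm_nonneg w)]
        have h1 : ‖w - z0‖ ^ 2 ≤ t ^ 2 := by
          have := norm_nonneg (w - z0)
          nlinarith
        rw [Complex.sq_norm, Complex.normSq_sub] at h1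
        rw [Complex.sq_norm]
        rw [Complex.sq_norm] at *
        simp only [Complex.normSq_apply, Complex.mul_re, Complex.conj_re, Complex.conj_im] at *
        rw [him] at h1 ⊢
        nlinarith [mul_nonneg hre0 (neg_nonneg.mpr hre)]
        nlinarith [norm_nonneg z0]
      · right; exact hS
    calc μ {w : ℂ | ‖w - z0‖ ≤ t} ≤
          μ ({w : ℂ | ‖w‖ ≤ Real.sqrt (t ^ 2 - ‖z0‖ ^ 2)} ∪
            {z : ℂ | ¬(z.im = 0 ∧ 0 ≤ z.re ∧ z.re ≤ 1)}) := measure_mono hsub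
      _ ≤ μ {w : ℂ | ‖w‖ ≤ Real.sqrt (t ^ 2 - ‖z0‖ ^ 2)} +
            μ {z : ℂ | ¬(z.im = 0 ∧ 0 ≤ z.re ∧ z.re ≤ 1)} := measure_union_le _ _
      _ = μ {w : ℂ | ‖w‖ ≤ Real.sqrt (t ^ 2 - ‖z0‖ ^ 2)} := by
            rw [hsupp, add_zero]
end
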